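/- Let λ, λ' > 1 and a ≥ 1 be real numbers. If for all positive integers n, (λ')^(n/2) + (λ')^(-n/2) ≤ (λ^(n/2) + λ^(-n/2))^a, then λ' ≤ λ^a. -/
import Mathlib


/-- If `λ, λ' > 1`, `a ≥ 1` and for all positive integers `n`,
`(λ')^(n/2) + (λ')^(-n/2) ≤ (λ^(n/2) + λ^(-n/2))^a`, then `λ' ≤ λ^a`. -/
theorem multiplier_le_of_trace_pow_le (lam lam' a : ℝ)
    (hlam : 1 < lam) (hlam' : 1 < lam') (ha : 1 ≤ a)
    (h : ∀ n : ℕ, 0 < n →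
      lam' ^ ((n : ℝ)/2) + lam' ^ (-((n : ℝ)/2)) ≤
        (lam ^ ((n : ℝ)/2) + lam ^ (-((n : ℝ)/2))) ^ a) :
    lam' ≤ lam ^ a := by
  by_contra hc
  push_neg at hc
  have hlamp : (0:ℝ) < lam := lt_trans one_pos hlam
  have hlamp' : (0:ℝ) < lam' := lt_trans one_pos hlam'
  have hlaa : (0:ℝ) < lam ^ a := Real.rpow_pos_of_pos hlamp a
  set r : ℝ := lam' / lam ^ a with hr
  have hr1 : 1 < r := (one_lt_div hlaa).2 hc
  set s : ℝ := r ^ ((1:ℝ)/2) with hs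
  have hs1 : 1 < s := Real.one_lt_rpow_iff_of_pos (lt_trans one_pos hr1) |>.2
    (Or.inl ⟨hr1, by norm_num⟩)
  obtain ⟨n, hn⟩ := pow_unbounded_of_one_lt ((2:ℝ) ^ a) hs1
  have hnpos : 0 < n := by
    rcases Nat.eq_zero_or_pos n with h0 | h0
    · exfalso
      rw [h0, pow_zero] at hn
      have : (1:ℝ) ≤ (2:ℝ) ^ a := Real.one_le_rpow (by norm_num) (le_trans zero_le_one ha)
      linarith
    · exact h0
  -- key bound : lam'^(n/2) ≤ 2^a * (lam^a)^(n/2)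
  have hx : (0:ℝ) ≤ (n : ℝ)/2 := by positivity
  have h1 : lam' ^ ((n : ℝ)/2) ≤ 2 ^ a * (lam ^ a) ^ ((n : ℝ)/2) := by
    have hle := h n hnpos
    have hnn : (0:ℝ) ≤ lam' ^ (-((n : ℝ)/2)) := le_of_lt (Real.rpow_pos_of_pos hlamp' _)
    have h2 : lam ^ (-((n : ℝ)/2)) ≤ lam ^ ((n : ℝ)/2) :=
      Real.rpow_le_rpow_of_exponent_le (le_of_lt hlam) (by linarith [neg_nonpos_of_nonneg hx])
    have h3 : (lam ^ ((n : ℝ)/2) + lam ^ (-((n : ℝ)/2))) ^ a ≤ (2 * lam ^ ((n : ℝ)/2)) ^ a := by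
      apply Real.rpow_le_rpow (by positivity) (by linarith) (le_trans zero_le_one ha)
    have h4 : (2 * lam ^ ((n : ℝ)/2)) ^ a = 2 ^ a * (lam ^ a) ^ ((n : ℝ)/2) := by
      rw [Real.mul_rpow (by norm_num) (le_of_lt (Real.rpow_pos_of_pos hlamp _))]
      congr 1
      rw [← Real.rpow_mul (le_of_lt hlamp), ← Real.rpow_mul (le_of_lt hlamp), mul_comm]
    calc lam' ^ ((n : ℝ)/2) ≤ lam' ^ ((n : ℝ)/2) + lam' ^ (-((n : ℝ)/2)) := by linarith
      _ ≤ (lam ^ ((n : ℝ)/2) + lam ^ (-((n : ℝ)/2))) ^ a := hle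
      _ ≤ (2 * lam ^ ((n : ℝ)/2)) ^ a := h3
      _ = 2 ^ a * (lam ^ a) ^ ((n : ℝ)/2) := h4
  -- s^n = lam'^(n/2) / (lam^a)^(n/2)
  have hsn : s ^ n = lam' ^ ((n : ℝ)/2) / (lam ^ a) ^ ((n : ℝ)/2) := by
    rw [hs, ← Real.rpow_natCast (r ^ ((1:ℝ)/2)) n, ← Real.rpow_mul (le_of_lt (lt_trans one_pos hr1))]
    rw [hr, Real.div_rpow (le_of_lt hlamp') (le_of_lt hlaa)]
    ring_nf
  rw [hsn] at hn
  have hpos : (0:ℝ) < (lam ^ a) ^ ((n : ℝ)/2) := Real.rpow_pos_of_pos hlaa _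
  rw [lt_div_iff₀ hpos] at hn
  linarith
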